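/- Let (u(t), v(t)) be a solution of the temporal predator–prey system with u(0) ≥ 0, v(0) ≥ 0, and set W(t) = u(t) + v(t)/σ and τ = min{1, δ}. Then W satisfies the differential inequality dW/dt ≤ 1 − τ W for all t ≥ 0, and consequently 0 ≤ W(t) ≤ 1/τ + (W(0) − 1/τ)·exp(−τ t) for all t ≥ 0; in particular the solutions are uniformly bounded. -/

import Mathlib

set_option maxHeartbeats 1000000

open Set Real


lemma stays_zero {f g : ℝ → ℝ} {a b C : ℝ}
    (hf' : ∀ x ∈ Set.Icc a b, HasDerivAt f (f x * g x) x)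
    (hb : ∀ x ∈ Set.Icc a b, |g x| ≤ C)
    (ha : f a = 0) : ∀ x ∈ Set.Icc a b, f x = 0 := by
  have hcont : ContinuousOn f (Set.Icc a b) := fun x hx =>
    (hf' x hx).continuousAt.continuousWithinAt
  have key := norm_le_gronwallBound_of_norm_deriv_right_le (f' := fun x => f x * g x)
    (δ := 0) (K := C) (ε := 0) hcont
    (fun x hx => (hf' x (Set.Ico_subset_Icc_self hx)).hasDerivWithinAt)
    (by simp [ha])
    (fun x hx => by
      have := hb x (Set.Ico_subset_Icc_self hx)
      have h0 : ‖f x * g x‖ = |f x| * |g x| := abs_mul _ _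
      rw [Real.norm_eq_abs] at *
      rw [h0, add_zero, mul_comm C]
      exact mul_le_mul_of_nonneg_left this (abs_nonneg _))
  intro x hx
  have := key x hx
  rw [gronwallBound_ε0_δ0] at this
  exact abs_eq_zero.mp (le_antisymm (by simpa using this) (abs_nonneg _))

lemma step_lemma
    (φ m h γ σ δ ω : ℝ)
    (hφ : 0 < φ) (hm : 0 < m) (hh : 0 < h) (hγ : 0 < γ) (hσ : 0 < σ) (hδ : 0 < δ)
    (hω0 : 0 ≤ ω) (hω1 : ω < 1)
    (u v : ℝ → ℝ)
    (hu : ∀ t ≥ (0 : ℝ), HasDerivAt u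
      (u t * (1 - u t) -
        (1 - ω * v t / (φ + v t)) * u t * v t /
          (m + h * (1 - ω * v t / (φ + v t)) * u t + γ * v t)) t)
    (hv : ∀ t ≥ (0 : ℝ), HasDerivAt v
      (σ * (1 - ω * v t / (φ + v t)) * u t * v t /
          (m + h * (1 - ω * v t / (φ + v t)) * u t + γ * v t) - δ * v t) t)
    (s : ℝ) (hs0 : 0 ≤ s) (hus : 0 ≤ u s) (hvs : 0 ≤ v s) :
    ∃ η > 0, ∀ r ∈ Set.Icc s (s + η), 0 ≤ u r ∧ 0 ≤ v r := by
  obtain ⟨ε', hε'def⟩ : ∃ x : ℝ, x = min (φ / 2) (m / (2 * (2 * h + γ))) := ⟨_, rfl⟩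
  have hε' : 0 < ε' := by rw [hε'def]; exact lt_min (by positivity) (by positivity)
  have hε'φ : ε' ≤ φ / 2 := by rw [hε'def]; exact min_le_left _ _
  have hε'm : ε' * (2 * (2 * h + γ)) ≤ m := by
    rw [hε'def, ← le_div_iff₀ (by positivity)]; exact min_le_right _ _
  -- continuity neighborhoods
  obtain ⟨η₁, hη₁, hcu⟩ := Metric.continuousAt_iff.mp (hu s hs0).continuousAt ε' hε'
  obtain ⟨η₂, hη₂, hcv⟩ := Metric.continuousAt_iff.mp (hv s hs0).continuousAt ε' hε'
  obtain ⟨η, hηdef⟩ : ∃ x : ℝ, x = min η₁ η₂ / 2 := ⟨_, rfl⟩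
  have hη : 0 < η := by rw [hηdef]; positivity
  have hmem : ∀ r ∈ Set.Icc s (s + η), |u r - u s| < ε' ∧ |v r - v s| < ε' := by
    intro r hr
    have hd : dist r s < min η₁ η₂ := by
      rw [Real.dist_eq, abs_of_nonneg (by linarith [hr.1])]
      have := hr.2
      have : r - s ≤ η := by linarith
      have hmin : (0:ℝ) < min η₁ η₂ := lt_min hη₁ hη₂
      calc r - s ≤ η := this
        _ < min η₁ η₂ := by rw [hηdef]; linarith
    constructor
    · have := hcu (lt_of_lt_of_le hd (min_le_left _ _))
      rwa [Real.dist_eq] at this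
    · have := hcv (lt_of_lt_of_le hd (min_le_right _ _))
      rwa [Real.dist_eq] at this
  -- basic bounds on the interval
  obtain ⟨Mu, hMu⟩ : ∃ x : ℝ, x = |u s| + ε' := ⟨_, rfl⟩
  obtain ⟨Mv, hMv⟩ : ∃ x : ℝ, x = |v s| + ε' := ⟨_, rfl⟩
  have hMu0 : 0 ≤ Mu := by rw [hMu]; positivity
  have hMv0 : 0 ≤ Mv := by rw [hMv]; positivity
  have hbounds : ∀ r ∈ Set.Icc s (s + η),
      -ε' ≤ u r ∧ |u r| ≤ Mu ∧ -ε' ≤ v r ∧ |v r| ≤ Mv := by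
    intro r hr
    obtain ⟨h1, h2⟩ := hmem r hr
    have h1' := abs_lt.mp h1
    have h2' := abs_lt.mp h2
    refine ⟨by linarith [h1'.1], ?_, by linarith [h2'.1], ?_⟩
    · have := abs_sub_abs_le_abs_sub (u r) (u s)
      calc |u r| ≤ |u s| + |u r - u s| := by
            have := abs_add_le (u r - u s) (u s); simpa using by linarith [abs_add_le (u r - u s) (u s), abs_sub_abs_le_abs_sub (u r) (u s)]
        _ ≤ Mu := by rw [hMu]; linarith [h1.le]
    · calc |v r| ≤ |v s| + |v r - v s| := by
            simpa using by linarith [abs_add_le (v r - v s) (v s), abs_sub_abs_le_abs_sub (v r) (v s)]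
        _ ≤ Mv := by rw [hMv]; linarith [h2.le]
  -- denominators
  obtain ⟨FR, hFR⟩ : ∃ F : ℝ → ℝ, F = fun r => 1 - ω * v r / (φ + v r) := ⟨_, rfl⟩
  obtain ⟨DD, hDD⟩ : ∃ F : ℝ → ℝ, F = fun r => m + h * FR r * u r + γ * v r := ⟨_, rfl⟩
  have hfacts : ∀ r ∈ Set.Icc s (s + η),
      0 < FR r ∧ FR r ≤ 2 ∧ m / 2 ≤ DD r := by
    intro r hr
    obtain ⟨hul, hub, hvl, hvb⟩ := hbounds r hr
    have hφv : φ / 2 ≤ φ + v r := by linarith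
    have hφvpos : 0 < φ + v r := by linarith
    have hfrpos : 0 < FR r := by
      have hq : ω * v r / (φ + v r) < 1 := by
        rw [div_lt_one hφvpos]
        rcases le_or_gt 0 (v r) with hv0 | hv0
        · nlinarith
        · nlinarith
      rw [hFR]; linarith
    have hfrle : FR r ≤ 2 := by
      have hq : (-1 : ℝ) ≤ ω * v r / (φ + v r) := by
        rw [le_div_iff₀ hφvpos]
        rcases le_or_gt 0 (v r) with hv0 | hv0
        · nlinarith
        · nlinarith
      rw [hFR]; linarith
    refine ⟨hfrpos, hfrle, ?_⟩
    have h1 : 0 ≤ FR r * (u r + ε') := mul_nonneg hfrpos.le (by linarith)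
    have h2 : FR r * ε' ≤ 2 * ε' := mul_le_mul_of_nonneg_right hfrle hε'.le
    have hfru : -(2 * ε') ≤ FR r * u r := by nlinarith
    have h3 : h * -(2 * ε') ≤ h * (FR r * u r) := mul_le_mul_of_nonneg_left hfru hh.le
    have h4 : γ * -ε' ≤ γ * v r := mul_le_mul_of_nonneg_left hvl hγ.le
    rw [hDD]
    linarith [h3, h4, hε'm]
  -- derivative forms
  have hdu : ∀ r ∈ Set.Icc s (s + η),
      HasDerivAt u (u r * (1 - u r - FR r * v r / DD r)) r := by
    intro r hr
    have := hu r (le_trans hs0 hr.1)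
    convert this using 1
    simp only [hFR, hDD]
    ring
  have hdv : ∀ r ∈ Set.Icc s (s + η),
      HasDerivAt v (v r * (σ * FR r * u r / DD r - δ)) r := by
    intro r hr
    have := hv r (le_trans hs0 hr.1)
    convert this using 1
    simp only [hFR, hDD]
    ring
  -- bounds on the logarithmic derivatives
  obtain ⟨Cu, hCu⟩ : ∃ x : ℝ, x = 1 + Mu + 2 * Mv / (m / 2) := ⟨_, rfl⟩
  obtain ⟨Cv, hCv⟩ : ∃ x : ℝ, x = σ * (2 * Mu) / (m / 2) + δ := ⟨_, rfl⟩
  have hgu : ∀ r ∈ Set.Icc s (s + η), |1 - u r - FR r * v r / DD r| ≤ Cu := by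
    intro r hr
    obtain ⟨hul, hub, hvl, hvb⟩ := hbounds r hr
    obtain ⟨hf1, hf2, hf3⟩ := hfacts r hr
    have hDpos : 0 < DD r := lt_of_lt_of_le (by positivity) hf3
    have hX : |FR r * v r / DD r| ≤ 2 * Mv / (m / 2) := by
      rw [abs_div, abs_of_pos hDpos, abs_mul, abs_of_pos hf1]
      apply div_le_div₀ (by positivity) ?_ (by positivity) hf3
      nlinarith [abs_nonneg (v r), hf1, hf2, hvb, hMv0]
    calc |1 - u r - FR r * v r / DD r| ≤ |1 - u r| + |FR r * v r / DD r| := abs_sub _ _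
      _ ≤ (1 + |u r|) + 2 * Mv / (m / 2) := by
          gcongr
          calc |1 - u r| ≤ |(1:ℝ)| + |u r| := abs_sub _ _
            _ = 1 + |u r| := by norm_num
      _ ≤ Cu := by rw [hCu]; linarith
  have hgv : ∀ r ∈ Set.Icc s (s + η), |σ * FR r * u r / DD r - δ| ≤ Cv := by
    intro r hr
    obtain ⟨hul, hub, hvl, hvb⟩ := hbounds r hr
    obtain ⟨hf1, hf2, hf3⟩ := hfacts r hr
    have hDpos : 0 < DD r := lt_of_lt_of_le (by positivity) hf3
    have hX : |σ * FR r * u r / DD r| ≤ σ * (2 * Mu) / (m / 2) := by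
      rw [abs_div, abs_of_pos hDpos, abs_mul, abs_mul, abs_of_pos hσ, abs_of_pos hf1]
      apply div_le_div₀ (by positivity) ?_ (by positivity) hf3
      have hbase : FR r * |u r| ≤ 2 * Mu := by nlinarith [abs_nonneg (u r), hf1, hf2, hub, hMu0]
      calc σ * FR r * |u r| = σ * (FR r * |u r|) := by ring
        _ ≤ σ * (2 * Mu) := mul_le_mul_of_nonneg_left hbase hσ.le
    calc |σ * FR r * u r / DD r - δ| ≤ |σ * FR r * u r / DD r| + |δ| := abs_sub _ _
      _ ≤ σ * (2 * Mu) / (m / 2) + δ := by rw [abs_of_pos hδ]; gcongr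
      _ = Cv := hCv.symm
  -- positivity claims
  have claimu : ∃ ηu > 0, ηu ≤ η ∧ ∀ r ∈ Set.Icc s (s + ηu), 0 ≤ u r := by
    rcases eq_or_lt_of_le hus with heq | hpos
    · refine ⟨η, hη, le_refl _, fun r hr => ?_⟩
      have := stays_zero (g := fun r => 1 - u r - FR r * v r / DD r) (C := Cu)
        hdu hgu heq.symm r hr
      rw [this]
    · obtain ⟨η₃, hη₃, hcu3⟩ := Metric.continuousAt_iff.mp (hu s hs0).continuousAt (u s) hpos
      refine ⟨min η (η₃ / 2), lt_min hη (by positivity), min_le_left _ _, fun r hr => ?_⟩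
      have hd : dist r s < η₃ := by
        rw [Real.dist_eq, abs_of_nonneg (by linarith [hr.1])]
        have := hr.2
        have h1 : r - s ≤ min η (η₃ / 2) := by linarith
        calc r - s ≤ min η (η₃ / 2) := h1
          _ ≤ η₃ / 2 := min_le_right _ _
          _ < η₃ := by linarith
      have := hcu3 hd
      rw [Real.dist_eq] at this
      have := abs_lt.mp this
      linarith [this.1]
  have claimv : ∃ ηv > 0, ηv ≤ η ∧ ∀ r ∈ Set.Icc s (s + ηv), 0 ≤ v r := by
    rcases eq_or_lt_of_le hvs with heq | hpos
    · refine ⟨η, hη, le_refl _, fun r hr => ?_⟩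
      have := stays_zero (g := fun r => σ * FR r * u r / DD r - δ) (C := Cv)
        hdv hgv heq.symm r hr
      rw [this]
    · obtain ⟨η₃, hη₃, hcv3⟩ := Metric.continuousAt_iff.mp (hv s hs0).continuousAt (v s) hpos
      refine ⟨min η (η₃ / 2), lt_min hη (by positivity), min_le_left _ _, fun r hr => ?_⟩
      have hd : dist r s < η₃ := by
        rw [Real.dist_eq, abs_of_nonneg (by linarith [hr.1])]
        have := hr.2
        have h1 : r - s ≤ min η (η₃ / 2) := by linarith
        calc r - s ≤ min η (η₃ / 2) := h1
          _ ≤ η₃ / 2 := min_le_right _ _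
          _ < η₃ := by linarith
      have := hcv3 hd
      rw [Real.dist_eq] at this
      have := abs_lt.mp this
      linarith [this.1]
  obtain ⟨ηu, hηu, hηuη, hclu⟩ := claimu
  obtain ⟨ηv, hηv, hηvη, hclv⟩ := claimv
  refine ⟨min ηu ηv, lt_min hηu hηv, fun r hr => ?_⟩
  constructor
  · exact hclu r ⟨hr.1, le_trans hr.2 (by linarith [min_le_left ηu ηv])⟩
  · exact hclv r ⟨hr.1, le_trans hr.2 (by linarith [min_le_right ηu ηv])⟩

lemma nonneg_lemma
    (φ m h γ σ δ ω : ℝ)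
    (hφ : 0 < φ) (hm : 0 < m) (hh : 0 < h) (hγ : 0 < γ) (hσ : 0 < σ) (hδ : 0 < δ)
    (hω0 : 0 ≤ ω) (hω1 : ω < 1)
    (u v : ℝ → ℝ)
    (hu : ∀ t ≥ (0 : ℝ), HasDerivAt u
      (u t * (1 - u t) -
        (1 - ω * v t / (φ + v t)) * u t * v t /
          (m + h * (1 - ω * v t / (φ + v t)) * u t + γ * v t)) t)
    (hv : ∀ t ≥ (0 : ℝ), HasDerivAt v
      (σ * (1 - ω * v t / (φ + v t)) * u t * v t /
          (m + h * (1 - ω * v t / (φ + v t)) * u t + γ * v t) - δ * v t) t)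
    (hu0 : 0 ≤ u 0) (hv0 : 0 ≤ v 0) :
    ∀ t ≥ (0 : ℝ), 0 ≤ u t ∧ 0 ≤ v t := by
  intro T hT
  set S : Set ℝ := {t | t ∈ Set.Icc 0 T ∧ ∀ r ∈ Set.Icc (0:ℝ) t, 0 ≤ u r ∧ 0 ≤ v r} with hS
  have h0S : (0:ℝ) ∈ S := by
    refine ⟨⟨le_refl _, hT⟩, fun r hr => ?_⟩
    have : r = 0 := le_antisymm hr.2 hr.1
    rw [this]; exact ⟨hu0, hv0⟩
  have hne : S.Nonempty := ⟨0, h0S⟩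
  have hbdd : BddAbove S := ⟨T, fun x hx => hx.1.2⟩
  set s := sSup S with hsdef
  have hs0 : 0 ≤ s := le_csSup hbdd h0S
  have hsT : s ≤ T := csSup_le hne fun x hx => hx.1.2
  have hltS : ∀ r, 0 ≤ r → r < s → 0 ≤ u r ∧ 0 ≤ v r := by
    intro r hr hrs
    obtain ⟨x, hxS, hrx⟩ := exists_lt_of_lt_csSup hne hrs
    exact hxS.2 r ⟨hr, hrx.le⟩
  have hss : 0 ≤ u s ∧ 0 ≤ v s := by
    rcases eq_or_lt_of_le hs0 with heq | hpos
    · rw [← heq]; exact ⟨hu0, hv0⟩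
    · constructor
      · refine ge_of_tendsto ((hu s hs0).continuousAt.continuousWithinAt
          (s := Set.Iio s)) ?_
        filter_upwards [Ioo_mem_nhdsLT hpos] with r hr
        exact (hltS r hr.1.le hr.2).1
      · refine ge_of_tendsto ((hv s hs0).continuousAt.continuousWithinAt
          (s := Set.Iio s)) ?_
        filter_upwards [Ioo_mem_nhdsLT hpos] with r hr
        exact (hltS r hr.1.le hr.2).2
  rcases lt_or_ge s T with hlt | hle
  · exfalso
    obtain ⟨η, hη, hstep⟩ := step_lemma φ m h γ σ δ ω hφ hm hh hγ hσ hδ hω0 hω1 u v hu hv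
      s hs0 hss.1 hss.2
    have hbS : min (s + η) T ∈ S := by
      refine ⟨⟨by positivity, min_le_right _ _⟩, fun r hr => ?_⟩
      rcases le_or_gt r s with hrs | hrs
      · rcases eq_or_lt_of_le hrs with heq | hlt'
        · rw [heq]; exact hss
        · exact hltS r hr.1 hlt'
      · exact hstep r ⟨hrs.le, le_trans hr.2 (min_le_left _ _)⟩
    have : min (s + η) T ≤ s := le_csSup hbdd hbS
    have : s < min (s + η) T := lt_min (by linarith) hlt
    linarith
  · have hsT' : s = T := le_antisymm hsT hle
    rw [← hsT']; exact hss



/-- Setting `W(t) = u(t) + v(t)/σ` and `τ = min{1, δ}`, any solution of the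
temporal predator–prey system with non-negative initial data satisfies the
differential inequality `dW/dt ≤ 1 − τ W` for all `t ≥ 0`, and consequently
`0 ≤ W(t) ≤ 1/τ + (W(0) − 1/τ)·exp(−τ t)` for all `t ≥ 0`; in particular the
solutions are uniformly bounded. -/
theorem temporal_solutions_uniformly_bounded
    (φ m h γ σ δ ω : ℝ)
    (hφ : 0 < φ) (hm : 0 < m) (hh : 0 < h) (hγ : 0 < γ) (hσ : 0 < σ) (hδ : 0 < δ)
    (hω0 : 0 ≤ ω) (hω1 : ω < 1)
    (u v : ℝ → ℝ)
    (hu : ∀ t ≥ (0 : ℝ), HasDerivAt u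
      (u t * (1 - u t) -
        (1 - ω * v t / (φ + v t)) * u t * v t /
          (m + h * (1 - ω * v t / (φ + v t)) * u t + γ * v t)) t)
    (hv : ∀ t ≥ (0 : ℝ), HasDerivAt v
      (σ * (1 - ω * v t / (φ + v t)) * u t * v t /
          (m + h * (1 - ω * v t / (φ + v t)) * u t + γ * v t) - δ * v t) t)
    (hu0 : 0 ≤ u 0) (hv0 : 0 ≤ v 0)
    (W : ℝ → ℝ) (hW : W = fun t => u t + v t / σ)
    (τ : ℝ) (hτ : τ = min 1 δ) :
    ∀ t ≥ (0 : ℝ),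
      deriv W t ≤ 1 - τ * W t ∧
      0 ≤ W t ∧
      W t ≤ 1 / τ + (W 0 - 1 / τ) * Real.exp (-τ * t) := by
  subst hW
  have hτpos : 0 < τ := by rw [hτ]; exact lt_min one_pos hδ
  have hτ1 : τ ≤ 1 := by rw [hτ]; exact min_le_left _ _
  have hτδ : τ ≤ δ := by rw [hτ]; exact min_le_right _ _
  have hnn := nonneg_lemma φ m h γ σ δ ω hφ hm hh hγ hσ hδ hω0 hω1 u v hu hv hu0 hv0
  have hWd : ∀ r ≥ (0:ℝ), HasDerivAt (fun y => u y + v y / σ)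
      (u r * (1 - u r) - δ * v r / σ) r := by
    intro r hr
    have H : HasDerivAt (fun y => u y + v y / σ) _ r := (hu r hr).add ((hv r hr).div_const σ)
    convert H using 1
    have h1 : σ * (1 - ω * v r / (φ + v r)) * u r * v r /
        (m + h * (1 - ω * v r / (φ + v r)) * u r + γ * v r)
        = σ * ((1 - ω * v r / (φ + v r)) * u r * v r /
          (m + h * (1 - ω * v r / (φ + v r)) * u r + γ * v r)) := by ring
    rw [h1, sub_div, mul_div_cancel_left₀ _ hσ.ne']
    ring
  have hkey : ∀ r ≥ (0:ℝ),
      u r * (1 - u r) - δ * v r / σ + τ * (u r + v r / σ) - 1 ≤ 0 := by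
    intro r hr
    obtain ⟨hur, hvr⟩ := hnn r hr
    have h1 : 0 ≤ (1 - τ) * u r := mul_nonneg (by linarith) hur
    have h2 : 0 ≤ (δ - τ) * (v r * σ⁻¹) := mul_nonneg (by linarith)
      (mul_nonneg hvr (inv_nonneg.mpr hσ.le))
    rw [div_eq_mul_inv, div_eq_mul_inv]
    nlinarith [h1, h2, sq_nonneg (1 - u r)]
  intro t ht
  refine ⟨?_, ?_, ?_⟩
  · rw [(hWd t ht).deriv]
    have := hkey t ht
    linarith
  · exact add_nonneg (hnn t ht).1 (div_nonneg (hnn t ht).2 hσ.le)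
  · -- Gronwall via antitone auxiliary function
    set G : ℝ → ℝ := fun r => (u r + v r / σ - 1 / τ) * Real.exp (τ * r) with hG
    have hGd : ∀ r ≥ (0:ℝ), HasDerivAt G
        ((u r * (1 - u r) - δ * v r / σ) * Real.exp (τ * r)
          + (u r + v r / σ - 1 / τ) * (Real.exp (τ * r) * τ)) r := by
      intro r hr
      have hlin : HasDerivAt (fun y : ℝ => τ * y) τ r := by
        simpa using (hasDerivAt_id r).const_mul τ
      exact ((hWd r hr).sub_const (1 / τ)).mul hlin.exp
    have hanti : AntitoneOn G (Set.Icc 0 t) := by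
      apply antitoneOn_of_deriv_nonpos (convex_Icc 0 t)
      · intro x hx
        exact ((hGd x hx.1).continuousAt).continuousWithinAt
      · intro x hx
        rw [interior_Icc] at hx
        exact ((hGd x hx.1.le).differentiableAt).differentiableWithinAt
      · intro x hx
        rw [interior_Icc] at hx
        rw [(hGd x hx.1.le).deriv]
        have hk := hkey x hx.1.le
        have he : (0:ℝ) < Real.exp (τ * x) := Real.exp_pos _
        have heq : (u x * (1 - u x) - δ * v x / σ) * Real.exp (τ * x)
            + (u x + v x / σ - 1 / τ) * (Real.exp (τ * x) * τ)
            = (u x * (1 - u x) - δ * v x / σ + τ * (u x + v x / σ) - 1) * Real.exp (τ * x) := by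
          field_simp
          ring
        rw [heq]
        exact mul_nonpos_of_nonpos_of_nonneg hk he.le
    have hGle : G t ≤ G 0 := hanti (Set.left_mem_Icc.mpr ht) ⟨ht, le_refl t⟩ ht
    have hG0 : G 0 = u 0 + v 0 / σ - 1 / τ := by
      simp [hG]
    have hexp : Real.exp (τ * t) * Real.exp (-τ * t) = 1 := by
      rw [← Real.exp_add, show τ * t + -τ * t = 0 by ring, Real.exp_zero]
    have hGt : G t = (u t + v t / σ - 1 / τ) * Real.exp (τ * t) := rfl
    rw [hGt, hG0] at hGle
    have hmul := mul_le_mul_of_nonneg_right hGle (Real.exp_nonneg (-τ * t))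
    have hlhs : (u t + v t / σ - 1 / τ) * Real.exp (τ * t) * Real.exp (-τ * t)
        = u t + v t / σ - 1 / τ := by
      rw [mul_assoc, hexp, mul_one]
    rw [hlhs] at hmul
    linarith
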